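/- Smooth functions vanishing on coordinate hyperplanes: Let n, k be natural numbers with k ≤ n, and let f : (Fin n → ℝ) → ℝ be infinitely differentiable (ContDiff ℝ ⊤). Suppose f(x) = 0 whenever x_i = 0 for some index i with i < k (i.e., f vanishes on the union of the first k coordinate hyperplanes). Then there exists an infinitely differentiable function v : (Fin n → ℝ) → ℝ such that f(x) = (∏_{i < k} x_i) · v(x) for all x ∈ ℝⁿ. -/

import Mathlib

open MeasureTheory Set Metric
open scoped Convolution

lemma contDiff_parametric_integral {P : Type*} [NormedAddCommGroup P] [NormedSpace ℝ P]
    (F : P × ℝ → ℝ) (hF : ContDiff ℝ (⊤ : ℕ∞) F) :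
    ContDiff ℝ (⊤ : ℕ∞) (fun x : P => ∫ t in (0:ℝ)..1, F (x, t)) := by
  set χ : ContDiffBump (1/2 : ℝ) := ⟨1, 2, one_pos, one_lt_two⟩ with hχ
  set g : P → ℝ → ℝ := fun p t => χ (-t) * F (p, -t) with hg
  have hcont : ContDiffOn ℝ (⊤ : ℕ∞) (fun x => ((Set.indicator (Set.Ioc (0:ℝ) 1)
      (fun _ => (1:ℝ))) ⋆[ContinuousLinearMap.mul ℝ ℝ, volume] g x) ((fun _ => (0:ℝ)) x))
      Set.univ := by
    apply contDiffOn_convolution_right_with_param_comp (ContinuousLinearMap.mul ℝ ℝ)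
      contDiffOn_const isOpen_univ (isCompact_closedBall (0:ℝ) 3)
    · intro p x _ hx
      have : χ (-x) = 0 := by
        apply χ.zero_of_le_dist
        simp only [mem_closedBall, Real.dist_eq, not_le, sub_zero] at hx ⊢
        rcases abs_cases x with ⟨h1, h2⟩ | ⟨h1, h2⟩ <;>
          rcases abs_cases ((-x) - 1/2) with ⟨h3, h4⟩ | ⟨h3, h4⟩ <;> linarith
      simp [hg, this]
    · exact (integrable_indicator_iff measurableSet_Ioc |>.2
        (integrableOn_const measure_Ioc_lt_top.ne)).locallyIntegrable
    · apply ContDiffOn.mul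
      · exact (χ.contDiff.comp (contDiff_snd.neg)).contDiffOn
      · exact (hF.comp (contDiff_fst.prodMk contDiff_snd.neg)).contDiffOn
  rw [contDiffOn_univ] at hcont
  convert hcont using 2 with p
  rw [convolution, intervalIntegral.integral_of_le zero_le_one,
      ← MeasureTheory.integral_indicator measurableSet_Ioc]
  congr 1
  ext t
  by_cases ht : t ∈ Set.Ioc (0:ℝ) 1
  · have h1 : χ t = 1 := by
      apply χ.one_of_mem_closedBall
      simp only [mem_closedBall, Real.dist_eq]
      rcases ht with ⟨h0, h1⟩
      rw [abs_le]; constructor <;> nlinarith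
    simp [ht, hg, ContinuousLinearMap.mul_apply', h1]
  · simp [ht, hg, ContinuousLinearMap.mul_apply']

lemma hadamard_step {n : ℕ} (j : Fin n) (f : (Fin n → ℝ) → ℝ)
    (hf : ContDiff ℝ (⊤ : ℕ∞) f) (h0 : ∀ x, x j = 0 → f x = 0) :
    ∃ g : (Fin n → ℝ) → ℝ, ContDiff ℝ (⊤ : ℕ∞) g ∧ ∀ x, f x = x j * g x := by
  classical
  set F : (Fin n → ℝ) × ℝ → ℝ :=
    fun q => fderiv ℝ f (Function.update q.1 j (q.2 * q.1 j)) (Pi.single j 1) with hFdef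
  have hψ : ContDiff ℝ (⊤ : ℕ∞) (fun q : (Fin n → ℝ) × ℝ =>
      Function.update q.1 j (q.2 * q.1 j)) := by
    rw [contDiff_pi]
    intro i
    by_cases hij : i = j
    · subst hij
      simp only [Function.update_self]
      exact contDiff_snd.mul
        ((ContinuousLinearMap.proj (R := ℝ) (φ := fun _ : Fin n => ℝ)
          i).contDiff.comp contDiff_fst)
    · simp only [Function.update_of_ne hij]
      exact (ContinuousLinearMap.proj (R := ℝ) (φ := fun _ : Fin n => ℝ)
        i).contDiff.comp contDiff_fst
  have hF : ContDiff ℝ (⊤ : ℕ∞) F := by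
    have h1 : ContDiff ℝ (⊤ : ℕ∞) (fderiv ℝ f) := hf.fderiv_right (le_of_eq (by norm_cast))
    exact (ContinuousLinearMap.apply ℝ ℝ (Pi.single j 1)).contDiff.comp (h1.comp hψ)
  refine ⟨fun x => ∫ t in (0:ℝ)..1, F (x, t), contDiff_parametric_integral F hF, fun x => ?_⟩
  have key : ∀ t : ℝ, HasDerivAt (fun s => f (Function.update x j (s * x j)))
      (x j * F (x, t)) t := by
    intro t
    have hψx : HasDerivAt (fun s : ℝ => Function.update x j (s * x j))
        (Pi.single j (x j)) t := by
      rw [hasDerivAt_pi]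
      intro i
      by_cases hij : i = j
      · subst hij
        simp only [Function.update_self, Pi.single_eq_same]
        simpa using (hasDerivAt_id t).mul_const (x i)
      · simp only [Function.update_of_ne hij, Pi.single_eq_of_ne hij]
        exact hasDerivAt_const t (x i)
    have hfd := (hf.differentiable (by simp) (Function.update x j (t * x j))).hasFDerivAt
    have := hfd.comp_hasDerivAt t hψx
    refine this.congr_deriv ?_
    have hsingle : Pi.single j (x j) = x j • (Pi.single j (1:ℝ) : Fin n → ℝ) := by
      rw [← Pi.single_smul, smul_eq_mul, mul_one]
    rw [hsingle, ContinuousLinearMap.map_smul, smul_eq_mul]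
  have hint : IntervalIntegrable (fun t => x j * F (x, t)) MeasureTheory.volume 0 1 :=
    ((continuous_const.mul (hF.continuous.comp
      (Continuous.prodMk_right x))).intervalIntegrable 0 1)
  have := intervalIntegral.integral_eq_sub_of_hasDerivAt (fun t _ => key t) hint
  rw [intervalIntegral.integral_const_mul] at this
  have e1 : Function.update x j ((1:ℝ) * x j) = x := by
    rw [one_mul, Function.update_eq_self]
  have e0 : f (Function.update x j ((0:ℝ) * x j)) = 0 := by
    apply h0; simp
  rw [e1, e0, sub_zero] at this
  exact this.symm

lemma main_aux (n : ℕ) : ∀ k : ℕ, k ≤ n → ∀ f : (Fin n → ℝ) → ℝ, ContDiff ℝ (⊤ : ℕ∞) f →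
    (∀ x : Fin n → ℝ, (∃ i : Fin n, (i : ℕ) < k ∧ x i = 0) → f x = 0) →
    ∃ v : (Fin n → ℝ) → ℝ, ContDiff ℝ (⊤ : ℕ∞) v ∧
      ∀ x : Fin n → ℝ,
        f x = (∏ i ∈ Finset.univ.filter (fun i : Fin n => (i : ℕ) < k), x i) * v x := by
  intro k
  induction k with
  | zero =>
    intro _ f hf _
    refine ⟨f, hf, fun x => ?_⟩
    simp
  | succ k ih =>
    intro hk f hf hvan
    obtain ⟨v, hv, hfv⟩ := ih (Nat.le_of_succ_le hk) f hf
      (fun x ⟨i, hi, hx⟩ => hvan x ⟨i, Nat.lt_succ_of_lt hi, hx⟩)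
    set j : Fin n := ⟨k, hk⟩ with hj
    have hvj : ∀ x : Fin n → ℝ, x j = 0 → v x = 0 := by
      intro x hxj
      set y : ℕ → Fin n → ℝ := fun m i =>
        if (i : ℕ) < k ∧ x i = 0 then (1:ℝ)/(m+1) else x i with hy
      have hz : ∀ m : ℕ, v (y m) = 0 := by
        intro m
        have hprod : (∏ i ∈ Finset.univ.filter (fun i : Fin n => (i : ℕ) < k), y m i) ≠ 0 := by
          rw [Finset.prod_ne_zero_iff]
          intro i hi
          rw [Finset.mem_filter] at hi
          by_cases h : x i = 0
          · simp only [hy, hi.2, h, and_self, if_true]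
            positivity
          · simp only [hy, h, and_false, if_false]
            exact h
        have hfy : f (y m) = 0 := by
          apply hvan
          refine ⟨j, by simp [hj], ?_⟩
          simp only [hy, hj, lt_self_iff_false, false_and, if_false]
          exact hxj
        have := hfv (y m)
        rw [hfy] at this
        exact (mul_eq_zero.1 this.symm).resolve_left hprod
      have hseq : Filter.Tendsto y Filter.atTop (nhds x) := by
        rw [tendsto_pi_nhds]
        intro i
        by_cases h : (i : ℕ) < k ∧ x i = 0
        · simpa [hy, h, h.2] using tendsto_one_div_add_atTop_nhds_zero_nat (𝕜 := ℝ)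
        · simp only [hy, h, if_false]
          exact tendsto_const_nhds
      have h1 : Filter.Tendsto (fun m => v (y m)) Filter.atTop (nhds (v x)) :=
        (hv.continuous.tendsto x).comp hseq
      have h2 : Filter.Tendsto (fun m => v (y m)) Filter.atTop (nhds 0) := by
        simp only [hz]
        exact tendsto_const_nhds
      exact tendsto_nhds_unique h1 h2
    obtain ⟨w, hw, hvw⟩ := hadamard_step j v hv hvj
    refine ⟨w, hw, fun x => ?_⟩
    have hins : Finset.univ.filter (fun i : Fin n => (i : ℕ) < k + 1)
        = insert j (Finset.univ.filter (fun i : Fin n => (i : ℕ) < k)) := by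
      ext i
      simp only [Finset.mem_filter, Finset.mem_univ, true_and, Finset.mem_insert, Fin.ext_iff, hj]
      omega
    have hjnot : j ∉ Finset.univ.filter (fun i : Fin n => (i : ℕ) < k) := by
      simp [hj]
    rw [hfv x, hvw x, hins, Finset.prod_insert hjnot]
    ring

/-- **Smooth functions vanishing on coordinate hyperplanes.** Let `k ≤ n` and let
`f : ℝⁿ → ℝ` be infinitely differentiable, vanishing on the union of the first `k`
coordinate hyperplanes.  Then `f = (x₁ ⋯ x_k) · v` for some infinitely differentiable
`v : ℝⁿ → ℝ`. -/
theorem smooth_vanishing_on_coordinate_hyperplanes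
    (n k : ℕ) (hk : k ≤ n)
    (f : (Fin n → ℝ) → ℝ) (hf : ContDiff ℝ (⊤ : ℕ∞) f)
    (hvanish : ∀ x : Fin n → ℝ, (∃ i : Fin n, (i : ℕ) < k ∧ x i = 0) → f x = 0) :
    ∃ v : (Fin n → ℝ) → ℝ, ContDiff ℝ (⊤ : ℕ∞) v ∧
      ∀ x : Fin n → ℝ,
        f x = (∏ i ∈ Finset.univ.filter (fun i : Fin n => (i : ℕ) < k), x i) * v x := by
  exact main_aux n k hk f hf hvanish
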